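/- arXiv:1509.02389 — 2 statements merged into one kernel-verified Lean document; each statement's English description precedes it below -/
import Mathlib

section
/- In the 1D i.i.d. checkerboard case where a(y,ω) = Σ_k 1_{[k,k+1)}(y) a_k(ω) with (a_k) i.i.d. taking values α and β each with probability 1/2, the antithetic estimator built from b_k = α + β - a_k satisfies: b(y,ω) has the same law as a(y,ω), and the antithetic approximation ã*_N = (a*_N + b*_N)/2, where a*_N = (N⁻¹Σ_{k=0}^{N-1} a_k⁻¹)⁻¹ and b*_N = (N⁻¹Σ_{k=0}^{N-1} b_k⁻¹)⁻¹, is an unbiased estimator of E[a*_N] with Var(ã*_N) ≤ Var(a*_N)/2. -/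
open MeasureTheory ProbabilityTheory

lemma aux_minmax_inv (α β : ℝ) : (min α β)⁻¹ + (max α β)⁻¹ = α⁻¹ + β⁻¹ := by
  rcases le_total α β with h | h
  · rw [min_eq_left h, max_eq_right h]
  · rw [min_eq_right h, max_eq_left h, add_comm]

lemma aux_sum_bounds {α β : ℝ} (hα : 0 < α) (hβ : 0 < β) {N : ℕ} (hN : 0 < N)
    {x : ℕ → ℝ} (hx : ∀ k, x k = α ∨ x k = β) :
    (max α β)⁻¹ ≤ (N:ℝ)⁻¹ * ∑ k ∈ Finset.range N, (x k)⁻¹ ∧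
    (N:ℝ)⁻¹ * ∑ k ∈ Finset.range N, (x k)⁻¹ ≤ (min α β)⁻¹ := by
  have hNpos : (0:ℝ) < N := by exact_mod_cast hN
  have hN0 : ((N:ℝ)) ≠ 0 := ne_of_gt hNpos
  have hm : 0 < min α β := lt_min hα hβ
  have hterm : ∀ k, (max α β)⁻¹ ≤ (x k)⁻¹ ∧ (x k)⁻¹ ≤ (min α β)⁻¹ := by
    intro k
    rcases hx k with h | h <;> rw [h] <;>
      exact ⟨inv_anti₀ (by assumption) (by simp),
        inv_anti₀ hm (by simp)⟩
  have lower : (N:ℝ) * (max α β)⁻¹ ≤ ∑ k ∈ Finset.range N, (x k)⁻¹ := by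
    have := Finset.sum_le_sum (fun k (_ : k ∈ Finset.range N) => (hterm k).1)
    simpa [Finset.sum_const, Finset.card_range, nsmul_eq_mul] using this
  have upper : ∑ k ∈ Finset.range N, (x k)⁻¹ ≤ (N:ℝ) * (min α β)⁻¹ := by
    have := Finset.sum_le_sum (fun k (_ : k ∈ Finset.range N) => (hterm k).2)
    simpa [Finset.sum_const, Finset.card_range, nsmul_eq_mul] using this
  constructor
  · calc (max α β)⁻¹ = (N:ℝ)⁻¹ * ((N:ℝ) * (max α β)⁻¹) := (inv_mul_cancel_left₀ hN0 _).symm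
      _ ≤ _ := mul_le_mul_of_nonneg_left lower (by positivity)
  · calc (N:ℝ)⁻¹ * ∑ k ∈ Finset.range N, (x k)⁻¹
        ≤ (N:ℝ)⁻¹ * ((N:ℝ) * (min α β)⁻¹) := mul_le_mul_of_nonneg_left upper (by positivity)
      _ = (min α β)⁻¹ := inv_mul_cancel_left₀ hN0 _

lemma aux_sum_b {α β : ℝ} {N : ℕ} {x : ℕ → ℝ} (hx : ∀ k, x k = α ∨ x k = β) :
    ∑ k ∈ Finset.range N, (α + β - x k)⁻¹
      = (N:ℝ) * (α⁻¹ + β⁻¹) - ∑ k ∈ Finset.range N, (x k)⁻¹ := by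
  have h : ∀ k, (α + β - x k)⁻¹ = (α⁻¹ + β⁻¹) - (x k)⁻¹ := by
    intro k
    rcases hx k with h | h <;> rw [h]
    · rw [add_sub_cancel_left]; ring
    · rw [add_sub_cancel_right]; ring
  rw [Finset.sum_congr rfl fun k _ => h k, Finset.sum_sub_distrib, Finset.sum_const,
    Finset.card_range, nsmul_eq_mul]

lemma aux_abs_bound {α β : ℝ} (hα : 0 < α) {t : ℝ}
    (h1 : (max α β)⁻¹ ≤ t) : |t⁻¹| ≤ max α β := by
  have hM : 0 < max α β := lt_of_lt_of_le hα (le_max_left _ _)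
  have hMi : 0 < (max α β)⁻¹ := inv_pos.mpr hM
  have ht : 0 < t := lt_of_lt_of_le hMi h1
  rw [abs_of_pos (inv_pos.mpr ht)]
  calc t⁻¹ ≤ ((max α β)⁻¹)⁻¹ := inv_anti₀ hMi h1
    _ = max α β := inv_inv _

lemma aux_sign {α β : ℝ} (hα : 0 < α) (hβ : 0 < β) {N : ℕ} (hN : 0 < N)
    {x y : ℕ → ℝ} (hx : ∀ k, x k = α ∨ x k = β) (hy : ∀ k, y k = α ∨ y k = β) :
    (((N:ℝ)⁻¹ * ∑ k ∈ Finset.range N, (x k)⁻¹)⁻¹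
      - ((N:ℝ)⁻¹ * ∑ k ∈ Finset.range N, (y k)⁻¹)⁻¹) *
    (((N:ℝ)⁻¹ * ∑ k ∈ Finset.range N, (α + β - x k)⁻¹)⁻¹
      - ((N:ℝ)⁻¹ * ∑ k ∈ Finset.range N, (α + β - y k)⁻¹)⁻¹) ≤ 0 := by
  have hNpos : (0:ℝ) < N := by exact_mod_cast hN
  have hN0 : ((N:ℝ)) ≠ 0 := ne_of_gt hNpos
  have hm : 0 < min α β := lt_min hα hβ
  have hM : 0 < max α β := lt_of_lt_of_le hα (le_max_left _ _)
  have hMi : 0 < (max α β)⁻¹ := inv_pos.mpr hM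
  have hc : (min α β)⁻¹ + (max α β)⁻¹ = α⁻¹ + β⁻¹ := aux_minmax_inv α β
  have hcx : (N:ℝ)⁻¹ * ∑ k ∈ Finset.range N, (α + β - x k)⁻¹
      = (α⁻¹ + β⁻¹) - (N:ℝ)⁻¹ * ∑ k ∈ Finset.range N, (x k)⁻¹ := by
    rw [aux_sum_b hx, mul_sub, inv_mul_cancel_left₀ hN0]
  have hcy : (N:ℝ)⁻¹ * ∑ k ∈ Finset.range N, (α + β - y k)⁻¹
      = (α⁻¹ + β⁻¹) - (N:ℝ)⁻¹ * ∑ k ∈ Finset.range N, (y k)⁻¹ := by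
    rw [aux_sum_b hy, mul_sub, inv_mul_cancel_left₀ hN0]
  obtain ⟨hx1, hx2⟩ := aux_sum_bounds hα hβ hN hx
  obtain ⟨hy1, hy2⟩ := aux_sum_bounds hα hβ hN hy
  set t := (N:ℝ)⁻¹ * ∑ k ∈ Finset.range N, (x k)⁻¹ with htdef
  set s := (N:ℝ)⁻¹ * ∑ k ∈ Finset.range N, (y k)⁻¹ with hsdef
  rw [hcx, hcy]
  have ht0 : 0 < t := lt_of_lt_of_le hMi hx1
  have hs0 : 0 < s := lt_of_lt_of_le hMi hy1
  have hct : 0 < α⁻¹ + β⁻¹ - t := by linarith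
  have hcs : 0 < α⁻¹ + β⁻¹ - s := by linarith
  rcases le_total t s with h | h
  · refine mul_nonpos_iff.mpr (Or.inl ⟨?_, ?_⟩)
    · exact sub_nonneg.mpr (inv_anti₀ ht0 h)
    · exact sub_nonpos.mpr (inv_anti₀ hcs (by linarith))
  · refine mul_nonpos_iff.mpr (Or.inr ⟨?_, ?_⟩)
    · exact sub_nonpos.mpr (inv_anti₀ hs0 h)
    · exact sub_nonneg.mpr (inv_anti₀ hct (by linarith))

lemma aux_joint_pi {Ω : Type*} [MeasurableSpace Ω] (μ : Measure Ω) [IsProbabilityMeasure μ]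
    (ν : Measure ℝ) [IsProbabilityMeasure ν]
    (c : ℕ → Ω → ℝ) (hc : ∀ k, Measurable (c k))
    (hind : iIndepFun c μ)
    (hlaw : ∀ k, Measure.map (c k) μ = ν) (N : ℕ) :
    Measure.map (fun ω => fun k : Fin N => c k ω) μ = Measure.pi fun _ : Fin N => ν := by
  have hA : Measurable (fun ω => fun k : Fin N => c k ω) :=
    measurable_pi_lambda _ fun k => hc k
  refine (Measure.pi_eq fun s hs => ?_).symm
  rw [Measure.map_apply hA (MeasurableSet.univ_pi hs)]
  classical
  set sets : ℕ → Set ℝ := fun n => if h : n < N then s ⟨n, h⟩ else Set.univ with hsets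
  have hsetsm : ∀ i, i ∈ Finset.range N → MeasurableSet (sets i) := by
    intro i _
    simp only [hsets]
    split
    · exact hs _
    · exact MeasurableSet.univ
  have hpre : (fun ω => fun k : Fin N => c k ω) ⁻¹' Set.pi Set.univ s
      = ⋂ i ∈ Finset.range N, c i ⁻¹' sets i := by
    ext ω
    simp only [Set.mem_preimage, Set.mem_univ_pi, Set.mem_iInter, Finset.mem_range, hsets]
    constructor
    · intro h i hi; simpa [dif_pos hi] using h ⟨i, hi⟩
    · intro h k; simpa [dif_pos k.2] using h k.1 k.2
  rw [hpre, hind.measure_inter_preimage_eq_mul (Finset.range N) hsetsm]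
  have h1 : ∀ i ∈ Finset.range N, μ (c i ⁻¹' sets i) = ν (sets i) := by
    intro i hi
    rw [← hlaw i, Measure.map_apply (hc i) (hsetsm i hi)]
  rw [Finset.prod_congr rfl h1]
  rw [← Fin.prod_univ_eq_prod_range (fun i => ν (sets i)) N]
  refine Finset.prod_congr rfl fun k _ => ?_
  simp only [hsets, k.2, dif_pos, Fin.eta]

/-- 1D i.i.d. Bernoulli case: with `b_k = α + β - a_k`, the antithetic field has the
same law as the original one, and the antithetic estimator
`ã*_N = (a*_N + b*_N)/2` (harmonic means of the cell values) is unbiased with at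
most half the variance. -/
theorem oneD_antithetic_bernoulli {Ω : Type*} [MeasurableSpace Ω]
    (μ : Measure Ω) [IsProbabilityMeasure μ]
    (α β : ℝ) (hα : 0 < α) (hβ : 0 < β)
    (a : ℕ → Ω → ℝ) (ha_meas : ∀ k, Measurable (a k))
    (ha_indep : iIndepFun a μ)
    (ha_law : ∀ k, Measure.map (a k) μ =
      (1/2 : ENNReal) • Measure.dirac α + (1/2 : ENNReal) • Measure.dirac β)
    (N : ℕ) (hN : 0 < N) :
    (Measure.map (fun ω => fun k : Fin N => α + β - a k ω) μ
        = Measure.map (fun ω => fun k : Fin N => a k ω) μ) ∧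
    (∫ ω, (((((N:ℝ))⁻¹ * ∑ k ∈ Finset.range N, (a k ω)⁻¹)⁻¹
          + (((N:ℝ))⁻¹ * ∑ k ∈ Finset.range N, (α + β - a k ω)⁻¹)⁻¹) / 2) ∂μ
        = ∫ ω, (((N:ℝ))⁻¹ * ∑ k ∈ Finset.range N, (a k ω)⁻¹)⁻¹ ∂μ) ∧
    variance (fun ω => (((((N:ℝ))⁻¹ * ∑ k ∈ Finset.range N, (a k ω)⁻¹)⁻¹
          + (((N:ℝ))⁻¹ * ∑ k ∈ Finset.range N, (α + β - a k ω)⁻¹)⁻¹) / 2)) μ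
      ≤ variance (fun ω => (((N:ℝ))⁻¹ * ∑ k ∈ Finset.range N, (a k ω)⁻¹)⁻¹) μ / 2 := by
  set ν : Measure ℝ := (1/2 : ENNReal) • Measure.dirac α + (1/2 : ENNReal) • Measure.dirac β
    with hν
  haveI hνP : IsProbabilityMeasure ν := by
    constructor
    rw [hν]
    simp only [Measure.coe_add, Pi.add_apply, Measure.smul_apply, measure_univ,
      smul_eq_mul, mul_one]
    rw [show (1/2 : ENNReal) = 2⁻¹ by norm_num]
    exact ENNReal.inv_two_add_inv_two
  have hT : Measurable (fun x : ℝ => α + β - x) := measurable_const.sub measurable_id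
  have hb_law : ∀ k, Measure.map ((fun x : ℝ => α + β - x) ∘ a k) μ = ν := by
    intro k
    rw [← Measure.map_map hT (ha_meas k), ha_law k, hν]
    rw [Measure.map_add _ _ hT, Measure.map_smul, Measure.map_smul,
      Measure.map_dirac' hT, Measure.map_dirac' hT]
    simp only [add_sub_cancel_left, add_sub_cancel_right]
    exact add_comm _ _
  have hb_indep : iIndepFun
      (fun k => (fun x : ℝ => α + β - x) ∘ a k) μ :=
    ha_indep.comp _ (fun _ => hT)
  have part1 : Measure.map (fun ω => fun k : Fin N => α + β - a k ω) μ
      = Measure.map (fun ω => fun k : Fin N => a k ω) μ := by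
    have h1 := aux_joint_pi μ ν a ha_meas ha_indep ha_law N
    have h2 := aux_joint_pi μ ν (fun k => (fun x : ℝ => α + β - x) ∘ a k)
      (fun k => hT.comp (ha_meas k)) hb_indep hb_law N
    exact h2.trans h1.symm
  -- a.e. values in {α, β}
  have hs : MeasurableSet ({α, β} : Set ℝ) := (measurableSet_singleton β).insert α
  have hν0 : ν (({α, β} : Set ℝ)ᶜ) = 0 := by
    rw [hν, Measure.add_apply, Measure.smul_apply, Measure.smul_apply,
      Measure.dirac_apply' _ hs.compl, Measure.dirac_apply' _ hs.compl]
    simp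
  have hν_ae : ∀ k, ∀ᵐ ω ∂μ, a k ω = α ∨ a k ω = β := by
    intro k
    have h0 : μ (a k ⁻¹' (({α, β} : Set ℝ)ᶜ)) = 0 := by
      rw [← Measure.map_apply (ha_meas k) hs.compl, ha_law k]
      exact hν0
    have hsetEq : {ω | ¬(a k ω = α ∨ a k ω = β)} = a k ⁻¹' (({α, β} : Set ℝ)ᶜ) := by
      ext ω; simp [Set.mem_preimage]
    rw [ae_iff, hsetEq]
    exact h0
  have hae : ∀ᵐ ω ∂μ, ∀ k, a k ω = α ∨ a k ω = β := ae_all_iff.mpr hν_ae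
  -- the two estimators
  set X : Ω → ℝ := fun ω => (((N:ℝ))⁻¹ * ∑ k ∈ Finset.range N, (a k ω)⁻¹)⁻¹ with hXdef
  set Y : Ω → ℝ := fun ω => (((N:ℝ))⁻¹ * ∑ k ∈ Finset.range N, (α + β - a k ω)⁻¹)⁻¹ with hYdef
  have X_meas : Measurable X := by
    rw [hXdef]
    exact (measurable_const.mul (Finset.measurable_sum _ fun k _ => (ha_meas k).inv)).inv
  have Y_meas : Measurable Y := by
    rw [hYdef]
    exact (measurable_const.mul (Finset.measurable_sum _ fun k _ =>
      (measurable_const.sub (ha_meas k)).inv)).inv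
  have hswap : ∀ {ω : Ω}, (∀ k, a k ω = α ∨ a k ω = β) →
      (∀ k, α + β - a k ω = α ∨ α + β - a k ω = β) := by
    intro ω hω k
    rcases hω k with h | h
    · right; rw [h, add_sub_cancel_left]
    · left; rw [h, add_sub_cancel_right]
  have hXbound : ∀ᵐ ω ∂μ, ‖X ω‖ ≤ max α β := by
    filter_upwards [hae] with ω hω
    simp only [hXdef, Real.norm_eq_abs]
    exact aux_abs_bound hα (aux_sum_bounds hα hβ hN hω).1
  have hYbound : ∀ᵐ ω ∂μ, ‖Y ω‖ ≤ max α β := by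
    filter_upwards [hae] with ω hω
    simp only [hYdef, Real.norm_eq_abs]
    exact aux_abs_bound hα (aux_sum_bounds hα hβ hN (hswap hω)).1
  have intX : Integrable X μ :=
    ⟨X_meas.aestronglyMeasurable, HasFiniteIntegral.of_bounded hXbound⟩
  have intY : Integrable Y μ :=
    ⟨Y_meas.aestronglyMeasurable, HasFiniteIntegral.of_bounded hYbound⟩
  have intXY : Integrable (fun ω => X ω * Y ω) μ := by
    refine ⟨(X_meas.mul Y_meas).aestronglyMeasurable,
      HasFiniteIntegral.of_bounded (C := max α β * max α β) ?_⟩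
    filter_upwards [hXbound, hYbound] with ω h1 h2
    calc ‖X ω * Y ω‖ = ‖X ω‖ * ‖Y ω‖ := norm_mul _ _
      _ ≤ max α β * max α β := mul_le_mul h1 h2 (norm_nonneg _) ((norm_nonneg _).trans h1)
  have intX2 : Integrable (fun ω => X ω ^ 2) μ := by
    refine ⟨(X_meas.pow_const 2).aestronglyMeasurable,
      HasFiniteIntegral.of_bounded (C := max α β ^ 2) ?_⟩
    filter_upwards [hXbound] with ω h1
    calc ‖X ω ^ 2‖ = ‖X ω‖ ^ 2 := norm_pow _ _
      _ ≤ max α β ^ 2 := pow_le_pow_left₀ (norm_nonneg _) h1 2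
  have intY2 : Integrable (fun ω => Y ω ^ 2) μ := by
    refine ⟨(Y_meas.pow_const 2).aestronglyMeasurable,
      HasFiniteIntegral.of_bounded (C := max α β ^ 2) ?_⟩
    filter_upwards [hYbound] with ω h1
    calc ‖Y ω ^ 2‖ = ‖Y ω‖ ^ 2 := norm_pow _ _
      _ ≤ max α β ^ 2 := pow_le_pow_left₀ (norm_nonneg _) h1 2
  have memX : MemLp X 2 μ :=
    (memLp_top_of_bound X_meas.aestronglyMeasurable (max α β) hXbound).mono_exponent
      le_top
  have memY : MemLp Y 2 μ :=
    (memLp_top_of_bound Y_meas.aestronglyMeasurable (max α β) hYbound).mono_exponent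
      le_top
  -- law transfer
  have hA_meas : Measurable (fun ω => fun k : Fin N => a k ω) :=
    measurable_pi_lambda _ fun k => ha_meas k
  have hB_meas : Measurable (fun ω => fun k : Fin N => α + β - a k ω) :=
    measurable_pi_lambda _ fun k => measurable_const.sub (ha_meas k)
  have htransfer : ∀ h : (Fin N → ℝ) → ℝ, Measurable h →
      ∫ ω, h (fun k : Fin N => α + β - a k ω) ∂μ
        = ∫ ω, h (fun k : Fin N => a k ω) ∂μ := by
    intro h hh
    rw [← integral_map hB_meas.aemeasurable hh.aestronglyMeasurable,
      ← integral_map hA_meas.aemeasurable hh.aestronglyMeasurable, part1]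
  have hg : Measurable (fun v : Fin N → ℝ => (((N:ℝ))⁻¹ * ∑ k : Fin N, (v k)⁻¹)⁻¹) :=
    (measurable_const.mul (Finset.measurable_sum _ fun k _ =>
      (measurable_pi_apply k).inv)).inv
  have eY : (fun ω => (((N:ℝ))⁻¹ * ∑ k : Fin N, (α + β - a k ω)⁻¹)⁻¹) = Y := by
    funext ω
    rw [Fin.sum_univ_eq_sum_range (fun k => (α + β - a k ω)⁻¹) N]
  have eX : (fun ω => (((N:ℝ))⁻¹ * ∑ k : Fin N, (a k ω)⁻¹)⁻¹) = X := by
    funext ω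
    rw [Fin.sum_univ_eq_sum_range (fun k => (a k ω)⁻¹) N]
  have hEY : ∫ ω, Y ω ∂μ = ∫ ω, X ω ∂μ := by
    have h := htransfer (fun v => (((N:ℝ))⁻¹ * ∑ k : Fin N, (v k)⁻¹)⁻¹) hg
    beta_reduce at h
    rw [eY, eX] at h
    exact h
  have hEY2 : ∫ ω, Y ω ^ 2 ∂μ = ∫ ω, X ω ^ 2 ∂μ := by
    have h := htransfer (fun v => ((((N:ℝ))⁻¹ * ∑ k : Fin N, (v k)⁻¹)⁻¹) ^ 2)
      (hg.pow_const 2)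
    beta_reduce at h
    have eY2 : (fun ω => ((((N:ℝ))⁻¹ * ∑ k : Fin N, (α + β - a k ω)⁻¹)⁻¹) ^ 2)
        = fun ω => Y ω ^ 2 := by
      funext ω
      rw [Fin.sum_univ_eq_sum_range (fun k => (α + β - a k ω)⁻¹) N]
    have eX2 : (fun ω => ((((N:ℝ))⁻¹ * ∑ k : Fin N, (a k ω)⁻¹)⁻¹) ^ 2)
        = fun ω => X ω ^ 2 := by
      funext ω
      rw [Fin.sum_univ_eq_sum_range (fun k => (a k ω)⁻¹) N]
    rw [eY2, eX2] at h
    exact h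
  -- covariance nonpositivity
  set G : Set Ω := {ω | ∀ k, a k ω = α ∨ a k ω = β} with hGdef
  have hGc : μ Gᶜ = 0 := by
    have h := ae_iff.mp hae
    have hEq : Gᶜ = {ω | ¬ ∀ k, a k ω = α ∨ a k ω = β} := by
      ext ω; simp [hGdef]
    rw [hEq]; exact h
  have e1 : ∀ᵐ z ∂(μ.prod μ), z.1 ∈ G := by
    rw [ae_iff]
    have hEq : {z : Ω × Ω | ¬ z.1 ∈ G} = Gᶜ ×ˢ (Set.univ : Set Ω) := by
      ext z; simp [Set.mem_prod]
    rw [hEq, Measure.prod_prod, hGc, zero_mul]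
  have e2 : ∀ᵐ z ∂(μ.prod μ), z.2 ∈ G := by
    rw [ae_iff]
    have hEq : {z : Ω × Ω | ¬ z.2 ∈ G} = (Set.univ : Set Ω) ×ˢ Gᶜ := by
      ext z; simp [Set.mem_prod]
    rw [hEq, Measure.prod_prod, hGc, mul_zero]
  have hcovint : ∫ z, (X z.1 - X z.2) * (Y z.1 - Y z.2) ∂(μ.prod μ) ≤ 0 := by
    apply integral_nonpos_of_ae
    filter_upwards [e1.and e2] with z hz
    have h1 : ∀ k, a k z.1 = α ∨ a k z.1 = β := hz.1
    have h2 : ∀ k, a k z.2 = α ∨ a k z.2 = β := hz.2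
    simp only [hXdef, hYdef, Pi.zero_apply]
    exact aux_sign hα hβ hN h1 h2
  have I11 : Integrable (fun z : Ω × Ω => X z.1 * Y z.1) (μ.prod μ) := by
    have h := intXY.mul_prod (integrable_const (μ := μ) (1:ℝ))
    simpa using h
  have I22 : Integrable (fun z : Ω × Ω => X z.2 * Y z.2) (μ.prod μ) := by
    have h := (integrable_const (μ := μ) (1:ℝ)).mul_prod intXY
    simpa using h
  have I12 : Integrable (fun z : Ω × Ω => X z.1 * Y z.2) (μ.prod μ) := intX.mul_prod intY
  have I21 : Integrable (fun z : Ω × Ω => X z.2 * Y z.1) (μ.prod μ) :=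
    (intY.mul_prod intX).congr (Filter.Eventually.of_forall fun z => mul_comm _ _)
  have hexp : (fun z : Ω × Ω => (X z.1 - X z.2) * (Y z.1 - Y z.2))
      = fun z : Ω × Ω => (X z.1 * Y z.1 - X z.1 * Y z.2)
          - (X z.2 * Y z.1 - X z.2 * Y z.2) := by
    funext z; ring
  have Ia : Integrable (fun z : Ω × Ω => X z.1 * Y z.1 - X z.1 * Y z.2) (μ.prod μ) :=
    I11.sub I12
  have Ib : Integrable (fun z : Ω × Ω => X z.2 * Y z.1 - X z.2 * Y z.2) (μ.prod μ) :=
    I21.sub I22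
  rw [hexp, integral_sub Ia Ib, integral_sub I11 I12, integral_sub I21 I22] at hcovint
  have v11 : ∫ z : Ω × Ω, X z.1 * Y z.1 ∂(μ.prod μ) = ∫ ω, X ω * Y ω ∂μ := by
    have := integral_prod_mul (μ := μ) (ν := μ) (fun ω => X ω * Y ω) (fun _ => (1:ℝ))
    simpa using this
  have v22 : ∫ z : Ω × Ω, X z.2 * Y z.2 ∂(μ.prod μ) = ∫ ω, X ω * Y ω ∂μ := by
    have := integral_prod_mul (μ := μ) (ν := μ) (fun _ => (1:ℝ)) (fun ω => X ω * Y ω)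
    simpa using this
  have v12 : ∫ z : Ω × Ω, X z.1 * Y z.2 ∂(μ.prod μ)
      = (∫ ω, X ω ∂μ) * (∫ ω, Y ω ∂μ) := integral_prod_mul (μ := μ) (ν := μ) X Y
  have v21 : ∫ z : Ω × Ω, X z.2 * Y z.1 ∂(μ.prod μ)
      = (∫ ω, Y ω ∂μ) * (∫ ω, X ω ∂μ) := by
    have h := integral_prod_mul (μ := μ) (ν := μ) Y X
    calc ∫ z : Ω × Ω, X z.2 * Y z.1 ∂(μ.prod μ)
        = ∫ z : Ω × Ω, Y z.1 * X z.2 ∂(μ.prod μ) := by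
          congr 1; funext z; ring
      _ = _ := h
  rw [v11, v12, v21, v22] at hcovint
  have hcov : ∫ ω, X ω * Y ω ∂μ ≤ (∫ ω, X ω ∂μ) * (∫ ω, X ω ∂μ) := by
    rw [hEY] at hcovint
    linarith
  -- part 2: unbiasedness
  have part2 : ∫ ω, (X ω + Y ω) / 2 ∂μ = ∫ ω, X ω ∂μ := by
    rw [integral_div, integral_add intX intY, hEY]
    ring
  refine ⟨part1, part2, ?_⟩
  -- part 3: variance
  have memZ : MemLp (fun ω => (X ω + Y ω) / 2) 2 μ := by
    have : (fun ω => (X ω + Y ω) / 2) = fun ω => (2:ℝ)⁻¹ * (X ω + Y ω) := by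
      funext ω; ring
    rw [this]
    exact (memX.add memY).const_mul _
  show variance (fun ω => (X ω + Y ω) / 2) μ ≤ variance X μ / 2
  rw [variance_eq_sub memZ, variance_eq_sub memX]
  simp only [Pi.pow_apply]
  have eZ2 : ∫ ω, ((X ω + Y ω) / 2) ^ 2 ∂μ
      = ((∫ ω, X ω ^ 2 ∂μ) + 2 * (∫ ω, X ω * Y ω ∂μ) + (∫ ω, Y ω ^ 2 ∂μ)) / 4 := by
    calc ∫ ω, ((X ω + Y ω) / 2) ^ 2 ∂μ
        = ∫ ω, (X ω ^ 2 + 2 * (X ω * Y ω) + Y ω ^ 2) / 4 ∂μ := by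
          apply integral_congr_ae
          filter_upwards with ω
          ring
      _ = _ := by
          have Id : Integrable (fun ω => 2 * (X ω * Y ω)) μ := intXY.const_mul 2
          have Ic : Integrable (fun ω => X ω ^ 2 + 2 * (X ω * Y ω)) μ := intX2.add Id
          rw [integral_div, integral_add Ic intY2, integral_add intX2 Id,
            integral_const_mul]
  rw [part2, eZ2, hEY2]
  have hsq : (∫ ω, X ω ∂μ) ^ 2 = (∫ ω, X ω ∂μ) * (∫ ω, X ω ∂μ) := sq _
  linarith
end

section
/- First-order expansion of the inverse of a perturbed harmonic mean (1D perturbative homogenization): for fixed positive reals a, c with a + c > 0 and Bernoulli(η) i.i.d. variables (B_k)_{k=0}^{N-1}, the expected 1D homogenized coefficient E[a*_N(η)] with a*_N(η) = (N⁻¹Σ_k (a + B_k c)⁻¹)⁻¹ satisfies E[a*_N(η)] = a + η·N·(h_N(1) - a) + O(η²) as η → 0, where h_N(1) = (N⁻¹((N-1)a⁻¹ + (a+c)⁻¹))⁻¹ is the coefficient with exactly one perturbed cell. -/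
open Filter Asymptotics Finset

lemma pow_one_sub_isBigO (n : ℕ) :
    (fun η : ℝ => (1 - η)^n - (1 - n * η)) =O[nhds 0] fun η : ℝ => η ^ 2 := by
  induction n with
  | zero =>
      have : (fun η : ℝ => (1 - η)^0 - (1 - (0:ℕ) * η)) = fun _ => (0:ℝ) := by
        funext η; simp
      rw [this]
      exact isBigO_zero _ _
  | succ n ih =>
      have key : (fun η : ℝ => (1 - η)^(n+1) - (1 - (n+1 : ℕ) * η))
          = fun η : ℝ => (1 - η) * ((1 - η)^n - (1 - n * η)) + n * η ^ 2 := by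
        funext η; push_cast; ring
      rw [key]
      have h1 : (fun η : ℝ => (1 - η)) =O[nhds 0] (fun _ : ℝ => (1:ℝ)) := by
        have : Tendsto (fun η : ℝ => (1 - η)) (nhds 0) (nhds 1) := by
          have : Continuous (fun η : ℝ => 1 - η) := by continuity
          simpa using this.tendsto (0:ℝ)
        exact this.isBigO_one ℝ
      have h2 := h1.mul ih
      simp only [one_mul] at h2
      exact h2.add ((isBigO_refl (fun η : ℝ => η ^ 2) _).const_mul_left n)

lemma pow_one_sub_isBigO' (n : ℕ) :
    (fun η : ℝ => (1 - η)^n - 1) =O[nhds 0] fun η : ℝ => η := by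
  have key : (fun η : ℝ => (1 - η)^n - 1)
      = fun η : ℝ => ((1 - η)^n - (1 - n * η)) + (-(n:ℝ)) * η := by
    funext η; ring
  rw [key]
  have hsq : (fun η : ℝ => η ^ 2) =O[nhds 0] fun η : ℝ => η := by
    have h1 : Tendsto (fun η : ℝ => η) (nhds (0:ℝ)) (nhds 0) := tendsto_id
    have := (h1.isBigO_one ℝ).mul (isBigO_refl (fun η : ℝ => η) (nhds 0))
    simpa [pow_two, one_mul] using this
  exact ((pow_one_sub_isBigO n).trans hsq).add
    ((isBigO_refl (fun η : ℝ => η) _).const_mul_left _)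

/-- First-order defect expansion of the expected 1D homogenized coefficient:
`E[a*_N(η)] = a + η N (h_N(1) - a) + O(η²)` as `η → 0`, where the expectation over
the i.i.d. Bernoulli(η) defects is written out as a sum over configurations and
`h_N(1)` is the coefficient of the configuration with exactly one perturbed cell. -/
theorem perturbative_expansion_one_defect (N : ℕ) (hN : 0 < N)
    (a c : ℝ) (ha : 0 < a) (hc : 0 < c) :
    (fun η : ℝ =>
        (∑ s : Fin N → Bool,
          (∏ k, if s k then η else 1 - η) *
            (((N:ℝ))⁻¹ * ∑ k, (a + if s k then c else 0)⁻¹)⁻¹)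
        - (a + η * N *
            ((((N:ℝ))⁻¹ * (((N:ℝ) - 1) * a⁻¹ + (a + c)⁻¹))⁻¹ - a)))
      =O[nhds 0] fun η : ℝ => η ^ 2 := by
  classical
  have hNR : (0:ℝ) < N := by exact_mod_cast hN
  set h : ℝ := (((N:ℝ))⁻¹ * (((N:ℝ) - 1) * a⁻¹ + (a + c)⁻¹))⁻¹ with hh
  set v : (Fin N → Bool) → ℝ :=
    fun s => (((N:ℝ))⁻¹ * ∑ k, (a + if s k then c else 0)⁻¹)⁻¹ with hv
  set P : (Fin N → Bool) → ℝ → ℝ :=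
    fun s η => ∏ k, if s k then η else 1 - η with hP
  set s₀ : Fin N → Bool := fun _ => false with hs₀
  set e : Fin N → (Fin N → Bool) := fun k j => j == k with he
  set A : Finset (Fin N → Bool) := insert s₀ (Finset.image e univ) with hA
  set T : Finset (Fin N → Bool) := univ \ A with hT
  -- basic facts
  have hPs₀ : ∀ η : ℝ, P s₀ η = (1 - η) ^ N := by
    intro η; simp [hP, hs₀, prod_const, card_univ]
  have hvs₀ : v s₀ = a := by
    have h1 : (∑ k : Fin N, (a + if s₀ k then c else 0)⁻¹) = N * a⁻¹ := by
      simp [hs₀, card_univ]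
    simp only [hv]
    rw [h1, ← mul_assoc, inv_mul_cancel₀ (ne_of_gt hNR), one_mul, inv_inv]
  have hPe : ∀ (k : Fin N) (η : ℝ), P (e k) η = η * (1 - η) ^ (N - 1) := by
    intro k η
    simp only [hP, he]
    rw [← Finset.mul_prod_erase univ _ (mem_univ k), if_pos (beq_self_eq_true k)]
    have hrest : ∀ j ∈ univ.erase k,
        (if (j == k) = true then η else 1 - η) = 1 - η := by
      intro j hj
      have : j ≠ k := (mem_erase.mp hj).1
      simp [this]
    rw [Finset.prod_congr rfl hrest, prod_const, card_erase_of_mem (mem_univ k),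
      card_univ, Fintype.card_fin]
  have hve : ∀ k : Fin N, v (e k) = h := by
    intro k
    have hsum : (∑ j : Fin N, (a + if (j == k) = true then c else 0)⁻¹)
        = ((N:ℝ) - 1) * a⁻¹ + (a + c)⁻¹ := by
      rw [← Finset.add_sum_erase univ _ (mem_univ k), if_pos (beq_self_eq_true k)]
      have hrest : ∀ j ∈ univ.erase k,
          (a + if (j == k) = true then c else 0)⁻¹ = a⁻¹ := by
        intro j hj
        have : j ≠ k := (mem_erase.mp hj).1
        simp [this]
      rw [Finset.sum_congr rfl hrest, sum_const, card_erase_of_mem (mem_univ k),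
        card_univ, Fintype.card_fin, nsmul_eq_mul]
      have hcast : ((N - 1 : ℕ) : ℝ) = (N : ℝ) - 1 := by
        push_cast [Nat.cast_sub hN]; ring
      rw [hcast]; ring
    simp only [hv, he, hh]
    rw [hsum]
  have heinj : Function.Injective e := by
    intro k k' hkk'
    have := congrFun hkk' k
    simpa [he] using this.symm
  have hs₀ne : s₀ ∉ Finset.image e univ := by
    intro hmem
    obtain ⟨k, -, hek⟩ := mem_image.mp hmem
    have := congrFun hek k
    simp [he, hs₀] at this
  -- split the sum
  have hsplit : ∀ η : ℝ,
      (∑ s : Fin N → Bool, P s η * v s)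
        = (1 - η) ^ N * a + (N:ℝ) * (η * (1 - η) ^ (N - 1)) * h
          + ∑ s ∈ T, P s η * v s := by
    intro η
    have h1 : ∑ s ∈ A, P s η * v s
        = (1 - η) ^ N * a + (N:ℝ) * (η * (1 - η) ^ (N - 1)) * h := by
      rw [hA, Finset.sum_insert hs₀ne,
        Finset.sum_image (fun x _ y _ hxy => heinj hxy), hPs₀ η, hvs₀]
      have h2 : ∀ k ∈ (univ : Finset (Fin N)),
          P (e k) η * v (e k) = (η * (1 - η) ^ (N - 1)) * h := by
        intro k _; rw [hPe, hve]
      rw [Finset.sum_congr rfl h2, sum_const, card_univ, Fintype.card_fin,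
        nsmul_eq_mul]
      ring
    rw [← Finset.sum_sdiff (subset_univ A), ← hT, h1]
    ring
  -- rewrite the target function and conclude
  have key : (fun η : ℝ => (∑ s : Fin N → Bool, P s η * v s)
        - (a + η * (N : ℝ) * (h - a)))
      =O[nhds 0] fun η : ℝ => η ^ 2 := by
    have main : (fun η : ℝ => (∑ s : Fin N → Bool, P s η * v s)
          - (a + η * (N : ℝ) * (h - a)))
        = fun η : ℝ =>
            a * ((1 - η) ^ N - (1 - N * η))
            + ((N:ℝ) * h) * (η * ((1 - η) ^ (N - 1) - 1))
            + ∑ s ∈ T, P s η * v s := by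
      funext η
      rw [hsplit η]
      ring
    rw [main]
    have piece1 : (fun η : ℝ => a * ((1 - η) ^ N - (1 - N * η)))
        =O[nhds 0] fun η : ℝ => η ^ 2 := (pow_one_sub_isBigO N).const_mul_left a
    have piece2 : (fun η : ℝ => ((N:ℝ) * h) * (η * ((1 - η) ^ (N - 1) - 1)))
        =O[nhds 0] fun η : ℝ => η ^ 2 := by
      have hmul := (isBigO_refl (fun η : ℝ => η) (nhds 0)).mul
        (pow_one_sub_isBigO' (N - 1))
      have h2 : (fun η : ℝ => η * ((1 - η) ^ (N - 1) - 1))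
          =O[nhds 0] fun η : ℝ => η ^ 2 := by
        simpa [pow_two] using hmul
      exact h2.const_mul_left _
    have piece3 : (fun η : ℝ => ∑ s ∈ T, P s η * v s)
        =O[nhds 0] fun η : ℝ => η ^ 2 := by
      apply Asymptotics.IsBigO.fun_sum
      intro s hs
      have hsT := hs
      rw [hT] at hsT
      replace hsT := (mem_sdiff (s := univ) (t := A)).mp (by convert hsT)
      rw [hA] at hsT
      have hs1 : s ≠ s₀ := fun hcon => hsT.2 (by rw [hcon]; exact mem_insert_self _ _)
      have hs2 : ∀ k, e k ≠ s := fun k hcon =>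
        hsT.2 (mem_insert_of_mem (mem_image.mpr ⟨k, mem_univ k, hcon⟩))
      obtain ⟨k1, hk1⟩ : ∃ k, s k = true := by
        by_contra hcon
        push_neg at hcon
        exact hs1 (funext fun k => by simp only [hs₀]; simpa using hcon k)
      obtain ⟨k2, hk2ne, hk2⟩ : ∃ k, k ≠ k1 ∧ s k = true := by
        by_contra hcon
        push_neg at hcon
        apply hs2 k1
        funext j
        by_cases hj : j = k1
        · simp [he, hj, hk1]
        · have hsj : s j = false := by simpa using hcon j hj
          simp [he, hj, hsj]
      set R : ℝ → ℝ :=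
        fun η => ∏ j ∈ (univ.erase k1).erase k2, (if s j then η else 1 - η) with hR
      have hfact : ∀ η : ℝ, P s η = η ^ 2 * R η := by
        intro η
        simp only [hP, hR]
        rw [← Finset.mul_prod_erase univ _ (mem_univ k1),
          ← Finset.mul_prod_erase (univ.erase k1) _
            (mem_erase.mpr ⟨hk2ne, mem_univ k2⟩),
          if_pos hk1, if_pos hk2]
        ring
      have hRcont : Continuous R := by
        rw [hR]
        apply continuous_finset_prod
        intro j _
        by_cases hsj : s j = true
        · simp only [if_pos hsj]; exact continuous_id
        · simp only [if_neg hsj]; exact continuous_const.sub continuous_id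
      have hRbound : (fun η : ℝ => R η * v s) =O[nhds 0] (fun _ : ℝ => (1:ℝ)) := by
        have : Tendsto (fun η : ℝ => R η * v s) (nhds 0) (nhds (R 0 * v s)) :=
          (hRcont.mul continuous_const).tendsto 0
        exact this.isBigO_one ℝ
      have hfun : (fun η : ℝ => P s η * v s) = fun η : ℝ => η ^ 2 * (R η * v s) := by
        funext η; rw [hfact]; ring
      rw [hfun]
      simpa using (isBigO_refl (fun η : ℝ => η ^ 2) (nhds 0)).mul hRbound
    exact (piece1.add piece2).add piece3
  exact key
end
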